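/- Let A be a Grothendieck abelian category whose global dimension is at most d, and let (D^{≤0}, D^{>0}) denote the canonical t-structure on the unbounded derived category D(A). Then Hom(X, Y) = 0 for all X ∈ D^{≥0} and all Y ∈ D^{<-d-2}. -/

import Mathlib

universe t w w₂ v u v' u'

open CategoryTheory Category Limits Pretriangulated Opposite

section Defs

variable (C : Type u) [Category.{v} C]

/-- The global dimension of an abelian category is at most `d` if
`Ext^i(X, Y) = 0` for all `i > d`, where Ext-groups are interpreted as
morphisms `X ⟶ Y⟦i⟧` in the derived category between the corresponding
objects concentrated in degree `0`. -/
def GlobalDimLE [Abelian C] [HasDerivedCategory.{w} C] (d : ℕ) : Prop :=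
  ∀ (X Y : C) (i : ℤ), (d : ℤ) < i →
    Subsingleton ((DerivedCategory.singleFunctor C 0).obj X ⟶
      (((DerivedCategory.singleFunctor C 0).obj Y)⟦i⟧))

variable {C}

/-- An object of the derived category is (cohomologically) bounded if its
cohomology is concentrated in finitely many degrees; these objects form
the bounded derived category `D^b`. -/
def IsBoundedObj [Abelian C] [HasDerivedCategory.{w} C] (X : DerivedCategory C) : Prop :=
  {i : ℤ | ¬ IsZero ((DerivedCategory.homologyFunctor C i).obj X)}.Finite

/-- An object `X` of a preadditive category is compact if `Hom(X, -)` commutes with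
arbitrary (set-indexed) coproducts, i.e. the additive coyoneda functor of `X`
preserves coproducts. -/
def IsCompactObject {D : Type u'} [Category.{v'} D] [Preadditive D] (X : D) : Prop :=
  ∀ ι : Type t, Nonempty (PreservesColimitsOfShape (Discrete ι)
    (preadditiveCoyoneda.obj (op X)))

end Defs

section Aux

open HomologicalComplex ZeroObject DerivedCategory

namespace GldimAux

variable {A : Type u} [Category.{v} A] [Abelian A]

section SimpLemmas

variable {C : Type*} [Category C] [HasZeroMorphisms C] {ι : Type*} {c : ComplexShape ι}

@[simp] lemma scObj_X₁ (K : HomologicalComplex C c) (i j k : ι) :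
    ((shortComplexFunctor' C c i j k).obj K).X₁ = K.X i := rfl
@[simp] lemma scObj_X₂ (K : HomologicalComplex C c) (i j k : ι) :
    ((shortComplexFunctor' C c i j k).obj K).X₂ = K.X j := rfl
@[simp] lemma scObj_X₃ (K : HomologicalComplex C c) (i j k : ι) :
    ((shortComplexFunctor' C c i j k).obj K).X₃ = K.X k := rfl
@[simp] lemma scObj_f (K : HomologicalComplex C c) (i j k : ι) :
    ((shortComplexFunctor' C c i j k).obj K).f = K.d i j := rfl
@[simp] lemma scObj_g (K : HomologicalComplex C c) (i j k : ι) :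
    ((shortComplexFunctor' C c i j k).obj K).g = K.d j k := rfl
@[simp] lemma scMap_τ₁ {K L : HomologicalComplex C c} (φ : K ⟶ L) (i j k : ι) :
    ((shortComplexFunctor' C c i j k).map φ).τ₁ = φ.f i := rfl
@[simp] lemma scMap_τ₂ {K L : HomologicalComplex C c} (φ : K ⟶ L) (i j k : ι) :
    ((shortComplexFunctor' C c i j k).map φ).τ₂ = φ.f j := rfl
@[simp] lemma scMap_τ₃ {K L : HomologicalComplex C c} (φ : K ⟶ L) (i j k : ι) :
    ((shortComplexFunctor' C c i j k).map φ).τ₃ = φ.f k := rfl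

@[simp] lemma scMapF_f {D : Type*} [Category D] [HasZeroMorphisms D] (S : ShortComplex C)
    (F : C ⥤ D) [F.PreservesZeroMorphisms] : (S.map F).f = F.map S.f := rfl
@[simp] lemma scMapF_g {D : Type*} [Category D] [HasZeroMorphisms D] (S : ShortComplex C)
    (F : C ⥤ D) [F.PreservesZeroMorphisms] : (S.map F).g = F.map S.g := rfl
@[simp] lemma evalMap_eq {K L : HomologicalComplex C c} (φ : K ⟶ L) (i : ι) :
    (HomologicalComplex.eval C c i).map φ = φ.f i := rfl
@[simp] lemma evalObj_eq (K : HomologicalComplex C c) (i : ι) :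
    (HomologicalComplex.eval C c i).obj K = K.X i := rfl
@[simp] lemma triMk_mor₁ {D : Type*} [Category D] [HasShift D ℤ] {X Y Z : D} (f : X ⟶ Y)
    (g : Y ⟶ Z) (h : Z ⟶ X⟦(1 : ℤ)⟧) : (Triangle.mk f g h).mor₁ = f := rfl
@[simp] lemma triMk_mor₂ {D : Type*} [Category D] [HasShift D ℤ] {X Y Z : D} (f : X ⟶ Y)
    (g : Y ⟶ Z) (h : Z ⟶ X⟦(1 : ℤ)⟧) : (Triangle.mk f g h).mor₂ = g := rfl

end SimpLemmas

/-! ### Stupid truncations of cochain complexes -/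

/-- Stupid truncation `σ^{≤ n}` of a cochain complex (a quotient complex). -/
noncomputable abbrev trLE (W : CochainComplex A ℤ) (n : ℤ) : CochainComplex A ℤ where
  X i := if i ≤ n then W.X i else 0
  d i j :=
    if h : i ≤ n ∧ j ≤ n then
      eqToHom (if_pos h.1) ≫ W.d i j ≫ eqToHom (if_pos h.2).symm
    else 0
  shape i j h := by
    by_cases h' : i ≤ n ∧ j ≤ n
    · rw [dif_pos h', W.shape i j h, zero_comp, comp_zero]
    · rw [dif_neg h']
  d_comp_d' i j k _ _ := by
    by_cases h1 : i ≤ n ∧ j ≤ n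
    · by_cases h2 : j ≤ n ∧ k ≤ n
      · rw [dif_pos h1, dif_pos h2]
        simp
      · rw [dif_pos h1, dif_neg h2, comp_zero]
    · rw [dif_neg h1, zero_comp]

/-- Stupid truncation `σ^{≥ n}` of a cochain complex (a subcomplex). -/
noncomputable abbrev trGE (W : CochainComplex A ℤ) (n : ℤ) : CochainComplex A ℤ where
  X i := if n ≤ i then W.X i else 0
  d i j :=
    if h : n ≤ i ∧ n ≤ j then
      eqToHom (if_pos h.1) ≫ W.d i j ≫ eqToHom (if_pos h.2).symm
    else 0
  shape i j h := by
    by_cases h' : n ≤ i ∧ n ≤ j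
    · rw [dif_pos h', W.shape i j h, zero_comp, comp_zero]
    · rw [dif_neg h']
  d_comp_d' i j k _ _ := by
    by_cases h1 : n ≤ i ∧ n ≤ j
    · by_cases h2 : n ≤ j ∧ n ≤ k
      · rw [dif_pos h1, dif_pos h2]
        simp
      · rw [dif_pos h1, dif_neg h2, comp_zero]
    · rw [dif_neg h1, zero_comp]

lemma isZero_trLE_X (W : CochainComplex A ℤ) (n i : ℤ) (h : ¬ i ≤ n) :
    IsZero ((trLE W n).X i) := by
  dsimp [trLE]
  rw [if_neg h]
  exact isZero_zero A

lemma isZero_trGE_X (W : CochainComplex A ℤ) (n i : ℤ) (h : ¬ n ≤ i) :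
    IsZero ((trGE W n).X i) := by
  dsimp [trGE]
  rw [if_neg h]
  exact isZero_zero A

/-- The projection `W ⟶ σ^{≤n} W`. -/
noncomputable def πLE (W : CochainComplex A ℤ) (n : ℤ) : W ⟶ trLE W n where
  f i := if hi : i ≤ n then eqToHom (if_pos hi).symm else 0
  comm' i j hij := by
    have hij' : i + 1 = j := hij
    dsimp [trLE]
    by_cases hj : j ≤ n
    · have hi : i ≤ n := by omega
      rw [dif_pos hi, dif_pos hj, dif_pos ⟨hi, hj⟩]
      simp
    · rw [dif_neg hj, comp_zero]
      by_cases hi : i ≤ n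
      · rw [dif_pos hi, dif_neg (fun h' => hj h'.2), comp_zero]
      · rw [dif_neg hi, zero_comp]

/-- The inclusion `σ^{≥n} W ⟶ W`. -/
noncomputable def ιGE (W : CochainComplex A ℤ) (n : ℤ) : trGE W n ⟶ W where
  f i := if hi : n ≤ i then eqToHom (if_pos hi) else 0
  comm' i j hij := by
    have hij' : i + 1 = j := hij
    dsimp [trGE]
    by_cases hi : n ≤ i
    · have hj : n ≤ j := by omega
      rw [dif_pos hi, dif_pos hj, dif_pos ⟨hi, hj⟩]
      simp
    · rw [dif_neg hi, dif_neg (fun h' => hi h'.1), zero_comp, zero_comp]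

/-- Factorization of a chain map through the stupid truncation `σ^{≤ n}` when the
target is concentrated in degrees `≤ n`. -/
noncomputable def factorLE {W T : CochainComplex A ℤ} (f : W ⟶ T) (n : ℤ)
    (hT : ∀ i, n < i → IsZero (T.X i)) : trLE W n ⟶ T where
  f i := if hi : i ≤ n then eqToHom (if_pos hi) ≫ f.f i else 0
  comm' i j hij := by
    have hij' : i + 1 = j := hij
    dsimp [trLE]
    by_cases hj : j ≤ n
    · have hi : i ≤ n := by omega
      rw [dif_pos hi, dif_pos hj, dif_pos ⟨hi, hj⟩]
      simp [f.comm i j]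
    · exact (hT j (by omega)).eq_of_tgt _ _

lemma πLE_comp_factorLE {W T : CochainComplex A ℤ} (f : W ⟶ T) (n : ℤ)
    (hT : ∀ i, n < i → IsZero (T.X i)) : πLE W n ≫ factorLE f n hT = f := by
  ext i
  dsimp [πLE, factorLE]
  by_cases hi : i ≤ n
  · rw [dif_pos hi, dif_pos hi]
    simp
  · exact (hT i (by omega)).eq_of_tgt _ _

lemma ιGE_comp_eq_zero {W T : CochainComplex A ℤ} (f : W ⟶ T) (n : ℤ)
    (hT : ∀ i, n ≤ i → IsZero (T.X i)) : ιGE W n ≫ f = 0 := by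
  ext i
  dsimp [ιGE]
  by_cases hi : n ≤ i
  · exact (hT i hi).eq_of_tgt _ _
  · rw [dif_neg hi, zero_comp]

/-- The short exact sequence `0 ⟶ σ^{≥ b+1} W ⟶ W ⟶ σ^{≤ b} W ⟶ 0`. -/
noncomputable def sesTr (W : CochainComplex A ℤ) (a b : ℤ) (hab : a = b + 1) :
    ShortComplex (CochainComplex A ℤ) :=
  ShortComplex.mk (ιGE W a) (πLE W b) (by
    ext i
    dsimp [ιGE, πLE]
    by_cases hi : a ≤ i
    · rw [dif_pos hi, dif_neg (by omega : ¬ i ≤ b), comp_zero]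
    · rw [dif_neg hi, zero_comp])

lemma sesTr_shortExact (W : CochainComplex A ℤ) (a b : ℤ) (hab : a = b + 1) :
    (sesTr W a b hab).ShortExact := by
  apply HomologicalComplex.shortExact_of_degreewise_shortExact
  intro i
  by_cases hi : a ≤ i
  · have hzero : IsZero ((trLE W b).X i) := isZero_trLE_X W b i (by omega)
    haveI hiso : IsIso ((ιGE W a).f i) := by
      dsimp [ιGE]
      rw [dif_pos hi]
      infer_instance
    refine ShortComplex.ShortExact.mk' ?_ ?_ ?_
    · rw [ShortComplex.exact_iff_epi]
      · dsimp [sesTr]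
        exact inferInstanceAs (Epi ((ιGE W a).f i))
      · exact hzero.eq_of_tgt _ _
    · dsimp [sesTr]
      exact inferInstanceAs (Mono ((ιGE W a).f i))
    · exact ⟨fun u v _ => hzero.eq_of_src u v⟩
  · have hzero : IsZero ((trGE W a).X i) := isZero_trGE_X W a i hi
    haveI hiso : IsIso ((πLE W b).f i) := by
      dsimp [πLE]
      rw [dif_pos (show i ≤ b by omega)]
      infer_instance
    refine ShortComplex.ShortExact.mk' ?_ ?_ ?_
    · rw [ShortComplex.exact_iff_mono]
      · dsimp [sesTr]
        exact inferInstanceAs (Mono ((πLE W b).f i))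
      · exact hzero.eq_of_src _ _
    · exact ⟨fun u v _ => hzero.eq_of_tgt u v⟩
    · dsimp [sesTr]
      exact inferInstanceAs (Epi ((πLE W b).f i))

end GldimAux

end Aux

namespace GldimAux2

open HomologicalComplex ZeroObject DerivedCategory GldimAux

variable {A : Type u} [Category.{v} A] [Abelian A]

/-! ### Exactness lemmas for stupid truncations -/

lemma exactAt_trLE_of_gt (W : CochainComplex A ℤ) (n i : ℤ) (h : n < i) :
    (trLE W n).ExactAt i := by
  rw [HomologicalComplex.exactAt_iff]
  exact ShortComplex.exact_of_isZero_X₂ _ (isZero_trLE_X W n i (by omega))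

lemma exactAt_trGE_of_lt (W : CochainComplex A ℤ) (n i : ℤ) (h : i < n) :
    (trGE W n).ExactAt i := by
  rw [HomologicalComplex.exactAt_iff]
  exact ShortComplex.exact_of_isZero_X₂ _ (isZero_trGE_X W n i (by omega))

lemma exactAt_trLE_of_lt (W : CochainComplex A ℤ) (n i : ℤ) (h : i < n)
    (hW : W.ExactAt i) : (trLE W n).ExactAt i := by
  rw [HomologicalComplex.exactAt_iff' _ (i-1) i (i+1) (by simp) (by simp)]
  rw [HomologicalComplex.exactAt_iff' _ (i-1) i (i+1) (by simp) (by simp)] at hW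
  let φmor : (trLE W n).sc' (i-1) i (i+1) ⟶ W.sc' (i-1) i (i+1) :=
    { τ₁ := eqToHom (by dsimp [trLE]; rw [if_pos (by omega : i - 1 ≤ n)])
      τ₂ := eqToHom (by dsimp [trLE]; rw [if_pos (by omega : i ≤ n)])
      τ₃ := eqToHom (by dsimp [trLE]; rw [if_pos (by omega : i + 1 ≤ n)])
      comm₁₂ := by
        dsimp [trLE]
        rw [dif_pos ⟨(by omega : i - 1 ≤ n), (by omega : i ≤ n)⟩]
        simp
        erw [eqToHom_trans, eqToHom_refl, comp_id]
      comm₂₃ := by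
        dsimp [trLE]
        rw [dif_pos ⟨(by omega : i ≤ n), (by omega : i + 1 ≤ n)⟩]
        simp
        erw [eqToHom_trans, eqToHom_refl, comp_id] }
  haveI : Epi φmor.τ₁ := by dsimp only [φmor]; infer_instance
  haveI : IsIso φmor.τ₂ := by dsimp only [φmor]; infer_instance
  haveI : Mono φmor.τ₃ := by dsimp only [φmor]; infer_instance
  exact (ShortComplex.exact_iff_of_epi_of_isIso_of_mono φmor).2 hW

lemma exactAt_trGE_of_gt (W : CochainComplex A ℤ) (n i : ℤ) (h : n < i)
    (hW : W.ExactAt i) : (trGE W n).ExactAt i := by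
  rw [HomologicalComplex.exactAt_iff' _ (i-1) i (i+1) (by simp) (by simp)]
  rw [HomologicalComplex.exactAt_iff' _ (i-1) i (i+1) (by simp) (by simp)] at hW
  let φmor : (trGE W n).sc' (i-1) i (i+1) ⟶ W.sc' (i-1) i (i+1) :=
    { τ₁ := eqToHom (by dsimp [trGE]; rw [if_pos (by omega : n ≤ i - 1)])
      τ₂ := eqToHom (by dsimp [trGE]; rw [if_pos (by omega : n ≤ i)])
      τ₃ := eqToHom (by dsimp [trGE]; rw [if_pos (by omega : n ≤ i + 1)])
      comm₁₂ := by
        dsimp [trGE]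
        rw [dif_pos ⟨(by omega : n ≤ i - 1), (by omega : n ≤ i)⟩]
        simp
        erw [eqToHom_trans, eqToHom_refl, comp_id]
      comm₂₃ := by
        dsimp [trGE]
        rw [dif_pos ⟨(by omega : n ≤ i), (by omega : n ≤ i + 1)⟩]
        simp
        erw [eqToHom_trans, eqToHom_refl, comp_id] }
  haveI : Epi φmor.τ₁ := by dsimp only [φmor]; infer_instance
  haveI : IsIso φmor.τ₂ := by dsimp only [φmor]; infer_instance
  haveI : Mono φmor.τ₃ := by dsimp only [φmor]; infer_instance
  exact (ShortComplex.exact_iff_of_epi_of_isIso_of_mono φmor).2 hW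

/-! ### The quasi-isomorphism `σ^{≤n} W ⟶ (single n).obj (im d^n)`  -/

/-- The canonical chain map from the stupid truncation `σ^{≤n} W` to the
complex consisting of `im (d^n)` in degree `n`. -/
noncomputable def toSingle (W : CochainComplex A ℤ) (n : ℤ) :
    trLE W n ⟶ (HomologicalComplex.single A (ComplexShape.up ℤ) n).obj (image (W.d n (n+1))) :=
  HomologicalComplex.mkHomToSingle
    (eqToHom (by dsimp [trLE]; rw [if_pos (le_refl n)]) ≫ factorThruImage (W.d n (n+1)))
    (fun i hi => by
      have hi' : i = n - 1 := by
        have : i + 1 = n := hi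
        omega
      subst hi'
      dsimp [trLE]
      rw [dif_pos ⟨(by omega : n - 1 ≤ n), le_refl n⟩]
      rw [← cancel_mono (image.ι (W.d n (n+1)))]
      simp)

lemma quasiIso_toSingle (W : CochainComplex A ℤ) (n : ℤ)
    (hW : ∀ i, i ≤ n → W.ExactAt i) : QuasiIso (toSingle W n) := by
  rw [quasiIso_iff]
  intro i
  rcases lt_trichotomy i n with h | rfl | h
  · rw [quasiIsoAt_iff_exactAt _ i (exactAt_trLE_of_lt W n i h (hW i h.le))]
    exact HomologicalComplex.exactAt_single_obj _ _ _ _ (by omega)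
  · rw [quasiIsoAt_iff' _ (i-1) i (i+1) (by simp) (by simp)]
    rw [ShortComplex.quasiIso_iff_of_zeros']
    rotate_left
    · dsimp [trLE]
      rw [dif_neg (by omega : ¬ (i ≤ i ∧ i + 1 ≤ i))]
      rfl
    · simp
      rfl
    · simp
      rfl
    constructor
    · have hWi := hW i le_rfl
      rw [HomologicalComplex.exactAt_iff' _ (i-1) i (i+1) (by simp) (by simp)] at hWi
      have hzero : (trLE W i).d (i-1) i ≫
          ((HomologicalComplex.shortComplexFunctor' A _ (i-1) i (i+1)).map (toSingle W i)).τ₂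
          = 0 := by
        have := ((HomologicalComplex.shortComplexFunctor' A
          (ComplexShape.up ℤ) (i-1) i (i+1)).map (toSingle W i)).comm₁₂
        dsimp at this ⊢
        rw [← this]
        simp
        rfl
      let φmor : ShortComplex.mk _ _ hzero ⟶ W.sc' (i-1) i (i+1) :=
        { τ₁ := eqToHom (by dsimp [trLE]; rw [if_pos (by omega : i - 1 ≤ i)])
          τ₂ := eqToHom (by dsimp [trLE]; rw [if_pos (le_refl i)])
          τ₃ := (HomologicalComplex.singleObjXSelf (ComplexShape.up ℤ) i
                  (image (W.d i (i+1)))).hom ≫ image.ι (W.d i (i+1))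
          comm₁₂ := by
            dsimp [trLE]
            rw [dif_pos ⟨(by omega : i - 1 ≤ i), le_refl i⟩]
            simp
            erw [eqToHom_trans, eqToHom_refl, comp_id]
          comm₂₃ := by
            dsimp [toSingle]
            rw [HomologicalComplex.mkHomToSingle_f]
            simp }
      haveI : Epi φmor.τ₁ := by dsimp only [φmor]; infer_instance
      haveI : IsIso φmor.τ₂ := by dsimp only [φmor]; infer_instance
      haveI : Mono φmor.τ₃ := by
        dsimp only [φmor]
        exact mono_comp' (inferInstanceAs (Mono (HomologicalComplex.singleObjXSelf
          (ComplexShape.up ℤ) i (image (W.d i (i+1)))).hom))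
          (inferInstanceAs (Mono (image.ι (W.d i (i+1)))))
      exact (ShortComplex.exact_iff_of_epi_of_isIso_of_mono φmor).2 hWi
    · dsimp [toSingle]
      rw [HomologicalComplex.mkHomToSingle_f]
      exact epi_comp _ _
  · rw [quasiIsoAt_iff_exactAt _ i (exactAt_trLE_of_gt W n i h)]
    exact HomologicalComplex.exactAt_single_obj _ _ _ _ (by omega)

/-! ### The quasi-isomorphism `(single n).obj (ker d^n) ⟶ σ^{≥n} W` -/

/-- The canonical chain map from the complex consisting of `ker (d^n)` in degree `n`
to the stupid truncation `σ^{≥n} W`. -/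
noncomputable def fromSingle (W : CochainComplex A ℤ) (n : ℤ) :
    (HomologicalComplex.single A (ComplexShape.up ℤ) n).obj (kernel (W.d n (n+1))) ⟶ trGE W n :=
  HomologicalComplex.mkHomFromSingle
    (kernel.ι (W.d n (n+1)) ≫
      eqToHom (show W.X n = (trGE W n).X n by dsimp [trGE]; rw [if_pos (le_refl n)]))
    (fun k hk => by
      have hk' : k = n + 1 := by
        have : n + 1 = k := hk
        omega
      subst hk'
      dsimp [trGE]
      rw [dif_pos ⟨le_refl n, (by omega : n ≤ n + 1)⟩]
      simp)

lemma quasiIso_fromSingle (W : CochainComplex A ℤ) (n : ℤ)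
    (hW : ∀ i, n + 1 ≤ i → W.ExactAt i) : QuasiIso (fromSingle W n) := by
  rw [quasiIso_iff]
  intro i
  rcases lt_trichotomy i n with h | rfl | h
  · rw [quasiIsoAt_iff_exactAt' _ i (exactAt_trGE_of_lt W n i h)]
    exact HomologicalComplex.exactAt_single_obj _ _ _ _ (by omega)
  · rw [quasiIsoAt_iff' _ (i-1) i (i+1) (by simp) (by simp)]
    rw [ShortComplex.quasiIso_iff_of_zeros]
    rotate_left
    · simp
      rfl
    · simp
      rfl
    · dsimp [trGE]
      rw [dif_neg (by omega : ¬ (i ≤ i - 1 ∧ i ≤ i))]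
      rfl
    constructor
    · have hker : (ShortComplex.mk (kernel.ι (W.d i (i+1))) (W.d i (i+1))
          (kernel.condition _)).Exact :=
        ShortComplex.exact_of_f_is_kernel _ (kernelIsKernel _)
      have hzero : ((HomologicalComplex.shortComplexFunctor' A _ (i-1) i (i+1)).map
          (fromSingle W i)).τ₂ ≫ (trGE W i).d i (i+1) = 0 := by
        have := ((HomologicalComplex.shortComplexFunctor' A
          (ComplexShape.up ℤ) (i-1) i (i+1)).map (fromSingle W i)).comm₂₃
        dsimp at this ⊢
        rw [this]
        simp
        rfl
      let φmor : ShortComplex.mk (kernel.ι (W.d i (i+1))) (W.d i (i+1))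
          (kernel.condition _) ⟶ ShortComplex.mk _ _ hzero :=
        { τ₁ := (HomologicalComplex.singleObjXSelf (ComplexShape.up ℤ) i
                  (kernel (W.d i (i+1)))).inv
          τ₂ := eqToHom (by dsimp [trGE]; rw [if_pos (le_refl i)])
          τ₃ := eqToHom (by dsimp [trGE]; rw [if_pos (by omega : i ≤ i + 1)])
          comm₁₂ := by
            dsimp [fromSingle]
            rw [HomologicalComplex.mkHomFromSingle_f]
            erw [Iso.inv_hom_id_assoc]
          comm₂₃ := by
            dsimp [trGE]
            rw [dif_pos ⟨le_refl i, (by omega : i ≤ i + 1)⟩]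
            erw [eqToHom_trans_assoc, eqToHom_refl, id_comp] }
      haveI : Epi φmor.τ₁ := by
        dsimp only [φmor]
        exact inferInstanceAs (Epi (HomologicalComplex.singleObjXSelf (ComplexShape.up ℤ) i
          (kernel (W.d i (i+1)))).inv)
      haveI : IsIso φmor.τ₂ := by dsimp only [φmor]; infer_instance
      haveI : Mono φmor.τ₃ := by dsimp only [φmor]; infer_instance
      exact (ShortComplex.exact_iff_of_epi_of_isIso_of_mono φmor).1 hker
    · dsimp [fromSingle]
      rw [HomologicalComplex.mkHomFromSingle_f]
      exact mono_comp _ _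
  · rw [quasiIsoAt_iff_exactAt' _ i (exactAt_trGE_of_gt W n i h (hW i (by omega)))]
    exact HomologicalComplex.exactAt_single_obj _ _ _ _ (by omega)

end GldimAux2

namespace GldimMain

open HomologicalComplex ZeroObject DerivedCategory GldimAux GldimAux2

variable {A : Type u} [Category.{v} A] [Abelian A] [HasDerivedCategory.{w} A]

/-- Morphisms between single objects in the derived category vanish beyond the
global dimension. -/
lemma hom_single_single_zero {d : ℕ} (hgl : GlobalDimLE.{w} A d)
    {M N : A} (a b : ℤ) (h : (d : ℤ) < a - b)
    (γ : (DerivedCategory.singleFunctor A a).obj M ⟶ (DerivedCategory.singleFunctor A b).obj N) :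
    γ = 0 := by
  let e₁ := ((DerivedCategory.singleFunctors A).shiftIso (-a) a 0 (by omega)).app M
  let e₂ := ((DerivedCategory.singleFunctors A).shiftIso (-b) b 0 (by omega)).app N
  let γ' : ((DerivedCategory.singleFunctor A 0).obj M)⟦-a⟧ ⟶
      ((DerivedCategory.singleFunctor A 0).obj N)⟦-b⟧ := e₁.hom ≫ γ ≫ e₂.inv
  let δ := (shiftFunctor (DerivedCategory A) a).map γ'
  let γ'' : (DerivedCategory.singleFunctor A 0).obj M ⟶
      ((DerivedCategory.singleFunctor A 0).obj N)⟦a - b⟧ :=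
    (shiftFunctorCompIsoId (DerivedCategory A) (-a) a (by omega)).inv.app _ ≫ δ ≫
      ((shiftFunctorAdd' (DerivedCategory A) (-b) a (a - b) (by omega)).inv.app _)
  have hγ'' : γ'' = 0 := by
    have := hgl M N (a - b) h
    exact Subsingleton.elim _ _
  have hδ : δ = (shiftFunctorCompIsoId (DerivedCategory A) (-a) a (by omega)).hom.app _ ≫ γ'' ≫
      ((shiftFunctorAdd' (DerivedCategory A) (-b) a (a - b) (by omega)).hom.app _) := by
    dsimp only [γ'']
    simp
  have hδ0 : δ = 0 := by rw [hδ, hγ'']; simp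
  have hγ'0 : γ' = 0 := by
    apply (shiftFunctor (DerivedCategory A) a).map_injective
    rw [Functor.map_zero]
    exact hδ0
  have : γ = e₁.inv ≫ γ' ≫ e₂.hom := by simp [γ']
  rw [this, hγ'0]
  simp

/-- Same statement, for `Q` applied to single complexes. -/
lemma hom_Q_single_single_zero {d : ℕ} (hgl : GlobalDimLE.{w} A d)
    {M N : A} (a b : ℤ) (h : (d : ℤ) < a - b)
    (γ : Q.obj ((HomologicalComplex.single A (ComplexShape.up ℤ) a).obj M) ⟶
      Q.obj ((HomologicalComplex.single A (ComplexShape.up ℤ) b).obj N)) : γ = 0 :=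
  hom_single_single_zero hgl a b h γ

/-- Every morphism in the derived category is a right fraction. -/
lemma exists_fraction {P R : CochainComplex A ℤ} (φ : Q.obj P ⟶ Q.obj R) :
    ∃ (W : CochainComplex A ℤ) (s : W ⟶ P) (f : W ⟶ R) (_ : QuasiIso s),
      Q.map s ≫ φ = Q.map f := by
  haveI : (HomotopyCategory.quasiIso A (ComplexShape.up ℤ)).HasRightCalculusOfFractions := by
    rw [HomotopyCategory.quasiIso_eq_subcategoryAcyclic_W]
    infer_instance
  obtain ⟨ψ, hψ⟩ := Localization.exists_rightFraction Qh
    (HomotopyCategory.quasiIso A (ComplexShape.up ℤ))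
    (show Qh.obj ((HomotopyCategory.quotient A (ComplexShape.up ℤ)).obj P) ⟶
      Qh.obj ((HomotopyCategory.quotient A (ComplexShape.up ℤ)).obj R) from φ)
  obtain ⟨s₀, hs₀⟩ := (HomotopyCategory.quotient A (ComplexShape.up ℤ)).map_surjective ψ.s
  obtain ⟨f₀, hf₀⟩ := (HomotopyCategory.quotient A (ComplexShape.up ℤ)).map_surjective ψ.f
  refine ⟨ψ.X'.as, s₀, f₀, ?_, ?_⟩
  · rw [← HomologicalComplex.mem_quasiIso_iff,
      ← HomotopyCategory.quotient_map_mem_quasiIso_iff, hs₀]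
    exact ψ.hs
  · have h2 := ψ.map_s_comp_map Qh
      (Localization.inverts Qh (HomotopyCategory.quasiIso A (ComplexShape.up ℤ)))
    rw [← hψ, ← hs₀, ← hf₀] at h2
    exact h2

/-- Vanishing of maps from `Q` of a single complex to `Q` of a complex concentrated
in low degrees. -/
lemma from_single_eq_zero {d : ℕ} (hgl : GlobalDimLE.{w} A d)
    {M : A} {a : ℤ} {Ky : CochainComplex A ℤ} (n : ℤ) (hd : (d : ℤ) < a - n)
    (hKy : ∀ i, n < i → IsZero (Ky.X i))
    (γ : Q.obj ((HomologicalComplex.single A (ComplexShape.up ℤ) a).obj M) ⟶ Q.obj Ky) :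
    γ = 0 := by
  obtain ⟨U, s, f, hs, hrel⟩ := exists_fraction γ
  haveI := hs
  have hU : ∀ i, i ≤ n → U.ExactAt i := by
    intro i hi
    rw [HomologicalComplex.exactAt_iff_isZero_homology]
    have h1 : IsZero ((((HomologicalComplex.single A (ComplexShape.up ℤ) a).obj M)).homology i) := by
      rw [← HomologicalComplex.exactAt_iff_isZero_homology]
      exact HomologicalComplex.exactAt_single_obj _ _ _ _ (by omega)
    haveI : IsIso (HomologicalComplex.homologyMap s i) :=
      (quasiIsoAt_iff_isIso_homologyMap s i).1 inferInstance
    exact IsZero.of_iso h1 (asIso (HomologicalComplex.homologyMap s i))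
  haveI := quasiIso_toSingle U n hU
  have hγ₀ : inv (Q.map s) ≫ Q.map (πLE U n) ≫ Q.map (toSingle U n) = 0 :=
    hom_Q_single_single_zero hgl a n hd _
  have h6 : Q.map (πLE U n) ≫ Q.map (toSingle U n) = 0 := by
    have h7 : Q.map (πLE U n) ≫ Q.map (toSingle U n) =
        Q.map s ≫ inv (Q.map s) ≫ Q.map (πLE U n) ≫ Q.map (toSingle U n) := by
      rw [IsIso.hom_inv_id_assoc]
    rw [h7, hγ₀, comp_zero]
  have hf0 : Q.map f = 0 := by
    rw [← πLE_comp_factorLE f n hKy, Q.map_comp]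
    have h8 : Q.map (factorLE f n hKy) = Q.map (toSingle U n) ≫
        inv (Q.map (toSingle U n)) ≫ Q.map (factorLE f n hKy) := by
      rw [IsIso.hom_inv_id_assoc]
    rw [h8, ← Category.assoc, h6, zero_comp]
  rw [hf0] at hrel
  rw [← cancel_epi (Q.map s), hrel, comp_zero]

/-- Vanishing of maps from a complex with no cohomology in negative degrees to
`Q` of a complex concentrated in low degrees. -/
lemma to_bounded_eq_zero {d : ℕ} (hgl : GlobalDimLE.{w} A d)
    {Kx Ky : CochainComplex A ℤ} (n : ℤ) (hn : (d : ℤ) < -1 - n)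
    (hKx : ∀ i, i < 0 → Kx.ExactAt i)
    (hKy : ∀ i, n < i → IsZero (Ky.X i))
    (φ : Q.obj Kx ⟶ Q.obj Ky) : φ = 0 := by
  obtain ⟨W, s, f, hs, hrel⟩ := exists_fraction φ
  haveI := hs
  have hW : ∀ i, i < 0 → W.ExactAt i := by
    intro i hi
    rw [HomologicalComplex.exactAt_iff_isZero_homology]
    have h1 : IsZero (Kx.homology i) := by
      rw [← HomologicalComplex.exactAt_iff_isZero_homology]
      exact hKx i hi
    haveI : IsIso (HomologicalComplex.homologyMap s i) :=
      (quasiIsoAt_iff_isIso_homologyMap s i).1 inferInstance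
    exact IsZero.of_iso h1 (asIso (HomologicalComplex.homologyMap s i))
  have h1 : ιGE W 0 ≫ f = 0 := ιGE_comp_eq_zero f 0 (fun i hi => hKy i (by omega))
  have hT := DerivedCategory.triangleOfSES_distinguished
    (sesTr_shortExact W 0 (-1) (by ring))
  obtain ⟨g', hg'⟩ := Pretriangulated.Triangle.yoneda_exact₂ _ hT (Q.map f) (by
    dsimp [DerivedCategory.triangleOfSES, sesTr]
    erw [← Q.map_comp, h1, Q.map_zero]
    rfl)
  haveI := quasiIso_toSingle W (-1) (fun i hi => hW i (by omega))
  have hγ : inv (Q.map (toSingle W (-1))) ≫ g' = 0 :=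
    from_single_eq_zero hgl n (by omega) hKy _
  have hf0 : Q.map f = 0 := by
    erw [hg']
    have h2 : g' = Q.map (toSingle W (-1)) ≫ inv (Q.map (toSingle W (-1))) ≫ g' := by
      erw [IsIso.hom_inv_id_assoc]
    dsimp [DerivedCategory.triangleOfSES, sesTr]
    erw [h2, hγ, comp_zero, comp_zero]
    rfl
  rw [hf0] at hrel
  rw [← cancel_epi (Q.map s), hrel, comp_zero]

end GldimMain

open HomologicalComplex DerivedCategory GldimAux GldimAux2 GldimMain in
/-- **Lemma (Hom-vanishing in `D(A)` for Grothendieck categories).**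
Let `A` be a Grothendieck abelian category of global dimension at most `d` and let
`(D^{≤0}, D^{>0})` be the canonical t-structure on `D(A)`. Then `Hom(X, Y) = 0`
for all `X ∈ D^{≥0}` (i.e. `H^i X = 0` for `i < 0`) and all `Y ∈ D^{< -d-2}`
(i.e. `H^i Y = 0` for `i ≥ -d-2`). -/
theorem hom_eq_zero_of_gldim_le
    (A : Type u) [Category.{v} A] [Abelian A] [HasColimits A] [HasFilteredColimits A]
    [AB5 A] [HasSeparator A] [HasDerivedCategory.{w} A]
    (d : ℕ) (_ : GlobalDimLE.{w} A d)
    (X Y : DerivedCategory A)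
    (hX : ∀ i : ℤ, i < 0 → IsZero ((DerivedCategory.homologyFunctor A i).obj X))
    (hY : ∀ i : ℤ, -(d : ℤ) - 2 ≤ i → IsZero ((DerivedCategory.homologyFunctor A i).obj Y)) :
    Subsingleton (X ⟶ Y) := by
  rename_i hgl
  suffices h : ∀ f : X ⟶ Y, f = 0 by
    exact ⟨fun f g => by rw [h f, h g]⟩
  haveI : (Q (C := A)).EssSurj :=
    Localization.essSurj Q (HomologicalComplex.quasiIso A (ComplexShape.up ℤ))
  intro f
  -- replace X and Y by complexes
  let Kx := Q.objPreimage X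
  let Ky := Q.objPreimage Y
  let eX : Q.obj Kx ≅ X := Q.objObjPreimageIso X
  let eY : Q.obj Ky ≅ Y := Q.objObjPreimageIso Y
  have hKx : ∀ i, i < 0 → Kx.ExactAt i := by
    intro i hi
    rw [HomologicalComplex.exactAt_iff_isZero_homology]
    refine IsZero.of_iso ?_ ((DerivedCategory.homologyFunctorFactors A i).app Kx).symm
    exact IsZero.of_iso (hX i hi) ((DerivedCategory.homologyFunctor A i).mapIso eX)
  have hKy : ∀ i, -(d : ℤ) - 2 ≤ i → Ky.ExactAt i := by
    intro i hi
    rw [HomologicalComplex.exactAt_iff_isZero_homology]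
    refine IsZero.of_iso ?_ ((DerivedCategory.homologyFunctorFactors A i).app Ky).symm
    exact IsZero.of_iso (hY i hi) ((DerivedCategory.homologyFunctor A i).mapIso eY)
  let φ : Q.obj Kx ⟶ Q.obj Ky := eX.hom ≫ f ≫ eY.inv
  suffices hφ : φ = 0 by
    have : f = eX.inv ≫ φ ≫ eY.hom := by simp [φ]
    rw [this, hφ]
    simp
  -- the short exact sequence 0 ⟶ σ^{≥ -d-2} Ky ⟶ Ky ⟶ σ^{≤ -d-3} Ky ⟶ 0
  set m : ℤ := -(d : ℤ) - 3 with hm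
  have hT := DerivedCategory.triangleOfSES_distinguished
    (sesTr_shortExact Ky (m + 1) m rfl)
  have step1 : φ ≫ Q.map (πLE Ky m) = 0 := by
    refine to_bounded_eq_zero hgl m (by omega) hKx ?_ _
    exact fun i hi => isZero_trLE_X Ky m i (by omega)
  obtain ⟨ψ₁, hψ₁⟩ := Pretriangulated.Triangle.coyoneda_exact₂ _ hT φ (by
    dsimp [DerivedCategory.triangleOfSES, sesTr]
    exact step1)
  haveI := quasiIso_fromSingle Ky (m + 1) (fun i hi => hKy i (by omega))
  have hψ₂ : ψ₁ ≫ (inv (Q.map (fromSingle Ky (m + 1))) : Q.obj (trGE Ky (m + 1)) ⟶ _) = 0 := by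
    refine to_bounded_eq_zero hgl (m + 1) (by omega) hKx ?_ _
    exact fun i hi =>
      HomologicalComplex.isZero_single_obj_X (ComplexShape.up ℤ) (m + 1) _ i (by omega)
  have hψ₁0 : ψ₁ = 0 := by
    have : ψ₁ = (ψ₁ ≫ (inv (Q.map (fromSingle Ky (m + 1))) : Q.obj (trGE Ky (m + 1)) ⟶ _)) ≫
        Q.map (fromSingle Ky (m + 1)) := by
      erw [Category.assoc, IsIso.inv_hom_id, comp_id]
    rw [this, hψ₂, zero_comp]
    rfl
  rw [hψ₁, hψ₁0, zero_comp]
  rfl
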